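/- Multicomponent construction lower bound: For positive integers k, n with n > 2k and k not dividing n, A_q(n,2k;k) ≥ (q^n − q^{k+(n mod k)} + q^k − 1)/(q^k − 1); equivalently there is a partial k-spread of this size, namely 1 + Σ_{i=1}^{⌊n/k⌋−1} q^{n−ik}. -/

import Mathlib

open Module

/-- The subspace distance between two subspaces. -/
noncomputable def dS {K V : Type*} [Field K] [AddCommGroup V] [Module K V]
    (U W : Submodule K V) : ℕ :=
  finrank K ↥(U ⊔ W) - finrank K ↥(U ⊓ W)

/-- The injection distance between two subspaces. -/
noncomputable def dI {K V : Type*} [Field K] [AddCommGroup V] [Module K V]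
    (U W : Submodule K V) : ℕ :=
  max (finrank K ↥U) (finrank K ↥W) - finrank K ↥(U ⊓ W)

/-- `Acdc K V d k` is the maximum cardinality of a set of `k`-dimensional subspaces of `V`
with pairwise subspace distance at least `d` (a constant dimension code). -/
noncomputable def Acdc (K V : Type*) [Field K] [AddCommGroup V] [Module K V]
    (d k : ℕ) : ℕ :=
  sSup { m | ∃ C : Finset (Submodule K V),
    (∀ U ∈ C, finrank K ↥U = k) ∧
    (∀ U ∈ C, ∀ W ∈ C, U ≠ W → d ≤ dS U W) ∧ C.card = m }

section Aux

open Polynomial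

universe u

lemma exists_finite_ext (K : Type u) [Field K] [Fintype K] (d : ℕ) (hd : d ≠ 0) :
    ∃ (L : Type u) (_ : Field L) (_ : Algebra K L) (_ : FiniteDimensional K L)
      (_ : Fintype L), Module.finrank K L = d := by
  classical
  obtain ⟨p, hchar⟩ := CharP.exists K
  haveI := hchar
  obtain ⟨s, hp, hcard⟩ := FiniteField.card K p
  haveI : Fact p.Prime := ⟨hp⟩
  have hp1 : 1 < p := hp.one_lt
  set e := (s : ℕ) * d with he
  have he0 : e ≠ 0 := Nat.mul_ne_zero s.2.ne' hd
  set g : K[X] := X ^ p ^ e - X with hg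
  let L := g.SplittingField
  haveI : Fintype L := Fintype.ofFinite L
  refine ⟨L, inferInstance, inferInstance, inferInstance, inferInstance, ?_⟩
  haveI : CharP L p := charP_of_injective_algebraMap (algebraMap K L).injective p
  have aux : g ≠ 0 := FiniteField.X_pow_card_pow_sub_X_ne_zero _ he0 hp1
  have key : Fintype.card (g.rootSet L) = g.natDegree :=
    card_rootSet_eq_natDegree (galois_poly_separable p _ (dvd_pow (dvd_refl p) he0))
      (SplittingField.splits g)
  have nat_degree_eq : g.natDegree = p ^ e :=
    FiniteField.X_pow_card_pow_sub_X_natDegree_eq _ he0 hp1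
  rw [nat_degree_eq] at key
  have huniv : g.rootSet L = Set.univ := by
    rw [Set.eq_univ_iff_forall]
    suffices h : ∀ (x) (_ : x ∈ (⊤ : Subalgebra K L)), x ∈ g.rootSet L by simpa using h
    rw [← SplittingField.adjoin_rootSet]
    simp_rw [Algebra.mem_adjoin_iff]
    intro x hx
    refine Subring.closure_induction ?_ ?_ ?_ ?_ ?_ ?_ hx <;> simp_rw [mem_rootSet_of_ne aux]
    · rintro x (⟨r, rfl⟩ | hx)
      · simp only [g, map_sub, map_pow, aeval_X]
        rw [← map_pow, sub_eq_zero]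
        congr 1
        have : p ^ e = Fintype.card K ^ d := by rw [hcard, he, pow_mul]
        rw [this, FiniteField.pow_card_pow]
      · rwa [mem_rootSet_of_ne aux] at hx
    · rw [← coeff_zero_eq_aeval_zero']
      simp only [g, coeff_X_pow, coeff_X_zero, sub_zero, _root_.map_eq_zero, ite_eq_right_iff,
        one_ne_zero, coeff_sub]
      intro hn
      exact Nat.not_lt_zero 1 (pow_eq_zero_iff he0 |>.mp hn.symm ▸ hp1)
    · simp [g]
    · simp only [g, aeval_X_pow, aeval_X, map_sub, add_pow_char_pow, sub_eq_zero]
      intro x y _ _ hx hy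
      rw [hx, hy]
    · intro x _ hx
      simp only [g, sub_eq_zero, aeval_X_pow, aeval_X, map_sub, sub_neg_eq_add] at *
      rw [neg_pow, hx, neg_one_pow_char_pow]
      ring
    · simp only [g, aeval_X_pow, aeval_X, map_sub, mul_pow, sub_eq_zero]
      intro x y _ _ hx hy
      rw [hx, hy]
  have hcardL : Fintype.card L = p ^ e := by
    have h1 : Nat.card (g.rootSet L) = p ^ e := by rw [← key, Nat.card_eq_fintype_card]
    rw [huniv] at h1
    rwa [Nat.card_coe_set_eq, Set.ncard_univ, Nat.card_eq_fintype_card] at h1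
  have hpow : Fintype.card L = Fintype.card K ^ Module.finrank K L :=
    card_eq_pow_finrank (K := K) (V := L)
  rw [hcardL, hcard, ← pow_mul] at hpow
  have := Nat.pow_right_injective hp.two_le hpow
  rw [he] at this
  exact Nat.eq_of_mul_eq_mul_left s.2 this.symm


lemma T_rec (q k m : ℕ) (hk : 1 ≤ k) (hm : 2 * k ≤ m) :
    (∑ i ∈ Finset.Icc 1 (m / k - 1), q ^ (m - i * k)) =
      q ^ (m - k) + ∑ i ∈ Finset.Icc 1 ((m - k) / k - 1), q ^ (m - k - i * k) := by
  set t := m / k with ht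
  have hr : m % k < k := Nat.mod_lt _ hk
  have hmk : m = k * t + m % k := (Nat.div_add_mod m k).symm ▸ by omega
  have ht2 : 2 ≤ t := by
    by_contra h
    push_neg at h
    interval_cases t <;> omega
  have h1 : (m - k) / k = t - 1 := by
    have h2 : m - k = m % k + (t - 1) * k := by
      have : (t - 1) * k = t * k - k := by rw [Nat.sub_mul, one_mul]
      have : t * k = k * t := Nat.mul_comm _ _
      omega
    rw [h2, Nat.add_mul_div_right _ _ hk, Nat.div_eq_of_lt hr, Nat.zero_add]
  rw [h1]
  rw [← Finset.Ico_add_one_right_eq_Icc, ← Finset.Ico_add_one_right_eq_Icc,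
    Finset.sum_Ico_eq_sum_range, Finset.sum_Ico_eq_sum_range]
  have e1 : t - 1 + 1 - 1 = (t - 2) + 1 := by omega
  have e2 : t - 1 - 1 + 1 - 1 = t - 2 := by omega
  rw [e1, e2, Finset.sum_range_succ']
  have e3 : q ^ (m - (1 + 0) * k) = q ^ (m - k) := by
    congr 1; omega
  rw [e3, Nat.add_comm]
  congr 1
  refine Finset.sum_congr rfl fun j _ => ?_
  congr 1
  have : (1 + (j + 1)) * k = k + (1 + j) * k := by ring
  rw [this, ← Nat.sub_sub]

lemma transport_spread {K V V' : Type u} [Field K] [AddCommGroup V] [Module K V]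
    [AddCommGroup V'] [Module K V'] (e : V ≃ₗ[K] V') {k c : ℕ} (C : Finset (Submodule K V))
    (h1 : ∀ U ∈ C, finrank K ↥U = k) (h2 : ∀ U ∈ C, ∀ W ∈ C, U ≠ W → U ⊓ W = ⊥)
    (h3 : C.card = c) :
    ∃ C' : Finset (Submodule K V'), (∀ U ∈ C', finrank K ↥U = k) ∧
      (∀ U ∈ C', ∀ W ∈ C', U ≠ W → U ⊓ W = ⊥) ∧ C'.card = c := by
  classical
  have hinj : Function.Injective (Submodule.map (e : V →ₗ[K] V')) :=
    Submodule.map_injective_of_injective e.injective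
  refine ⟨C.image (Submodule.map (e : V →ₗ[K] V')), ?_, ?_, ?_⟩
  · intro U hU
    obtain ⟨P, hP, rfl⟩ := Finset.mem_image.mp hU
    rw [LinearEquiv.finrank_map_eq]
    exact h1 P hP
  · intro U hU U' hU' hne
    obtain ⟨P, hP, rfl⟩ := Finset.mem_image.mp hU
    obtain ⟨P', hP', rfl⟩ := Finset.mem_image.mp hU'
    have hne' : P ≠ P' := fun h => hne (by rw [h])
    rw [← Submodule.map_inf (e : V →ₗ[K] V') e.injective, h2 P hP P' hP' hne', Submodule.map_bot]
  · rw [Finset.card_image_of_injective _ hinj, h3]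

/-- In any f.d. space there is a submodule of any finrank `k ≤ finrank V`. -/
lemma exists_submodule_finrank_eq' (K : Type u) [Field K] (V : Type u) [AddCommGroup V]
    [Module K V] [FiniteDimensional K V] (k : ℕ) (hk : k ≤ finrank K V) :
    ∃ U : Submodule K V, finrank K ↥U = k := by
  obtain ⟨s, hcard, hind⟩ := exists_finset_linearIndependent_of_le_finrank hk
  exact ⟨Submodule.span K ↑s, by rw [finrank_span_finset_eq_card hind, hcard]⟩

lemma exists_partial_spread (K : Type u) [Field K] [Fintype K] (k : ℕ) (hk : 1 ≤ k) :
    ∀ m : ℕ, ∀ (V : Type u) (_ : AddCommGroup V) (_ : Module K V)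
      (_ : FiniteDimensional K V), finrank K V = m → k ≤ m →
      ∃ C : Finset (Submodule K V),
        (∀ U ∈ C, finrank K ↥U = k) ∧
        (∀ U ∈ C, ∀ W ∈ C, U ≠ W → U ⊓ W = ⊥) ∧
        C.card = 1 + ∑ i ∈ Finset.Icc 1 (m / k - 1), Fintype.card K ^ (m - i * k) := by
  intro m
  induction m using Nat.strong_induction_on with
  | _ m IH =>
  intro V _ _ _ hV hkm
  classical
  by_cases h2 : m < 2 * k
  · -- single subspace
    obtain ⟨U, hU⟩ := exists_submodule_finrank_eq' K V k (hV ▸ hkm)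
    have hdiv : m / k = 1 := by
      rw [Nat.div_eq_of_lt_le] <;> omega
    refine ⟨{U}, by simpa using hU, ?_, ?_⟩
    · intro U₁ h1 U₂ hh2 hne
      simp only [Finset.mem_singleton] at h1 hh2
      exact absurd (h1.trans hh2.symm) hne
    · simp [hdiv]
  · -- recursive construction
    push_neg at h2
    set q := Fintype.card K with hq
    have hd0 : m - k ≠ 0 := by omega
    obtain ⟨L, _, _, _, _, hL⟩ := exists_finite_ext K (m - k) hd0
    obtain ⟨S, hS⟩ := exists_submodule_finrank_eq' K L k (by omega)
    -- the model space
    let V₀ := ↥S × L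
    have hV₀ : finrank K V₀ = m := by
      rw [Module.finrank_prod, hS, hL]; omega
    -- the graph family
    let f : L → (↥S →ₗ[K] L) := fun a => (LinearMap.mulLeft K a).comp S.subtype
    let G : L → Submodule K V₀ := fun a => LinearMap.graph (f a)
    have hGrank : ∀ a, finrank K ↥(G a) = k := by
      intro a
      rw [show G a = LinearMap.range (LinearMap.id.prod (f a)) from
        LinearMap.graph_eq_range_prod _]
      rw [LinearMap.finrank_range_of_inj, hS]
      intro x y hxy
      exact congrArg Prod.fst hxy
    have hGmem : ∀ a (z : V₀), z ∈ G a ↔ z.2 = a * (z.1 : L) := by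
      intro a z; rfl
    have hGinf : ∀ a b, a ≠ b → G a ⊓ G b = ⊥ := by
      intro a b hab
      rw [eq_bot_iff]
      rintro ⟨x, y⟩ hz
      obtain ⟨h1, h2⟩ := Submodule.mem_inf.mp hz
      rw [hGmem] at h1 h2
      have hx : (x : L) = 0 := by
        by_contra hx0
        exact hab (mul_right_cancel₀ hx0 (h1.symm.trans h2))
      have hx' : x = 0 := Subtype.ext hx
      have hy : y = 0 := by simpa [hx] using h1
      simp [Submodule.mem_bot, hx', hy, Prod.ext_iff, Prod.mk_zero_zero]
    -- the hyperplane-ish subspace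
    let W : Submodule K V₀ := LinearMap.range (LinearMap.inr K ↥S L)
    have hWrank : finrank K ↥W = m - k := by
      rw [LinearMap.finrank_range_of_inj LinearMap.inr_injective, hL]
    have hGW : ∀ a, G a ⊓ W = ⊥ := by
      intro a
      rw [eq_bot_iff]
      rintro ⟨x, y⟩ hz
      obtain ⟨h1, h2⟩ := Submodule.mem_inf.mp hz
      rw [hGmem] at h1
      obtain ⟨y', hy'⟩ := h2
      have hx : x = 0 := by
        have := congrArg Prod.fst hy'
        exact this.symm
      have hy : y = 0 := by simpa [hx] using h1
      simp [Submodule.mem_bot, hx, hy, Prod.ext_iff, Prod.mk_zero_zero]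
    have hk0 : 0 < k := hk
    have hrankG_pos : ∀ a, G a ≠ ⊥ := by
      intro a hbot
      have := hGrank a
      rw [hbot] at this
      simp [finrank_bot] at this
      omega
    have hGinj : Function.Injective G := by
      intro a b hab
      by_contra hne
      exact hrankG_pos a (by rw [← hGinf a b hne]; rw [hab, inf_idem])
    -- recursion inside W
    have hWfd : FiniteDimensional K ↥W := inferInstance
    suffices h : ∃ C : Finset (Submodule K V₀),
        (∀ U ∈ C, finrank K ↥U = k) ∧
        (∀ U ∈ C, ∀ W ∈ C, U ≠ W → U ⊓ W = ⊥) ∧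
        C.card = 1 + ∑ i ∈ Finset.Icc 1 (m / k - 1), q ^ (m - i * k) by
      obtain ⟨C, p1, p2, p3⟩ := h
      exact transport_spread (LinearEquiv.ofFinrankEq V₀ V (by rw [hV₀, hV])) C p1 p2 p3
    obtain ⟨C', hC'rank, hC'inf, hC'card⟩ :=
      IH (m - k) (by omega) ↥W inferInstance inferInstance inferInstance hWrank (by omega)
    let emb : Submodule K ↥W → Submodule K V₀ := Submodule.map W.subtype
    have hembinj : Function.Injective emb :=
      Submodule.map_injective_of_injective W.injective_subtype
    let C₀ : Finset (Submodule K V₀) := Finset.univ.image G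
    let C₁ : Finset (Submodule K V₀) := C'.image emb
    have hC₁le : ∀ X ∈ C₁, X ≤ W := by
      intro X hX
      obtain ⟨U, _, rfl⟩ := Finset.mem_image.mp hX
      exact Submodule.map_subtype_le W U
    have hC₁rank : ∀ X ∈ C₁, finrank K ↥X = k := by
      intro X hX
      obtain ⟨U, hU, rfl⟩ := Finset.mem_image.mp hX
      rw [Submodule.finrank_map_subtype_eq]
      exact hC'rank U hU
    have hdisj : Disjoint C₀ C₁ := by
      rw [Finset.disjoint_left]
      intro X hX0 hX1
      obtain ⟨a, _, rfl⟩ := Finset.mem_image.mp hX0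
      have hle : G a ≤ W := hC₁le _ hX1
      have : G a = ⊥ := by
        rw [← hGW a, inf_eq_left.mpr hle]
      exact hrankG_pos a this
    refine ⟨C₀ ∪ C₁, ?_, ?_, ?_⟩
    · intro U hU
      rcases Finset.mem_union.mp hU with hU | hU
      · obtain ⟨a, _, rfl⟩ := Finset.mem_image.mp hU
        exact hGrank a
      · exact hC₁rank U hU
    · intro U hU U' hU' hne
      rcases Finset.mem_union.mp hU with hU | hU <;>
        rcases Finset.mem_union.mp hU' with hU' | hU'
      · obtain ⟨a, _, rfl⟩ := Finset.mem_image.mp hU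
        obtain ⟨b, _, rfl⟩ := Finset.mem_image.mp hU'
        exact hGinf a b (fun h => hne (by rw [h]))
      · obtain ⟨a, _, rfl⟩ := Finset.mem_image.mp hU
        have := hC₁le _ hU'
        rw [eq_bot_iff, ← hGW a]
        exact le_inf inf_le_left (le_trans inf_le_right this)
      · obtain ⟨a, _, rfl⟩ := Finset.mem_image.mp hU'
        have := hC₁le _ hU
        rw [eq_bot_iff, ← hGW a]
        exact le_inf inf_le_right (le_trans inf_le_left this)
      · obtain ⟨P, hP, rfl⟩ := Finset.mem_image.mp hU
        obtain ⟨P', hP', rfl⟩ := Finset.mem_image.mp hU'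
        have hne' : P ≠ P' := fun h => hne (by rw [h])
        have : emb P ⊓ emb P' = emb (P ⊓ P') :=
          (Submodule.map_inf W.subtype W.injective_subtype).symm
        rw [this, hC'inf P hP P' hP' hne']
        simp [emb]
    · rw [Finset.card_union_of_disjoint hdisj]
      have hcard0 : C₀.card = q ^ (m - k) := by
        rw [Finset.card_image_of_injective _ hGinj, Finset.card_univ]
        rw [card_eq_pow_finrank (K := K) (V := L), hL]
      have hcard1 : C₁.card = C'.card := Finset.card_image_of_injective _ hembinj
      rw [hcard0, hcard1, hC'card, T_rec q k m hk h2]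
      ring


lemma geo_sum (Q : ℕ) (hQ : 1 ≤ Q) :
    ∀ s : ℕ, (∑ j ∈ Finset.range s, Q ^ j) * (Q - 1) + 1 = Q ^ s := by
  intro s
  induction s with
  | zero => simp
  | succ s ih =>
    rw [Finset.sum_range_succ, Nat.add_mul, pow_succ]
    have h1 : Q ^ s * (Q - 1) = Q ^ s * Q - Q ^ s := by
      rw [Nat.mul_sub, Nat.mul_one]
    have h2 : Q ^ s ≤ Q ^ s * Q := Nat.le_mul_of_pos_right _ hQ
    omega

lemma arith_main (q k n : ℕ) (hq : 2 ≤ q) (hk : 1 ≤ k) (h2k : 2 * k < n) :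
    (q ^ n - q ^ (k + n % k) + q ^ k - 1) / (q ^ k - 1) =
      1 + ∑ i ∈ Finset.Icc 1 (n / k - 1), q ^ (n - i * k) := by
  set t := n / k with ht
  set r := n % k with hr
  have hdm := Nat.div_add_mod n k
  have hrk : r < k := Nat.mod_lt _ hk
  have hn : n = k * t + r := by rw [ht, hr]; omega
  have ht2 : 2 ≤ t := by
    rw [ht, Nat.le_div_iff_mul_le (by omega : 0 < k)]; omega
  set Q := q ^ k with hQdef
  have hQ2 : 2 ≤ Q := by
    have h1 : q ^ 1 ≤ q ^ k := Nat.pow_le_pow_right (by omega) hk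
    rw [pow_one] at h1; omega
  -- reindex the sum
  have hsum : ∑ i ∈ Finset.Icc 1 (t - 1), q ^ (n - i * k) =
      q ^ (k + r) * ∑ j ∈ Finset.range (t - 1), Q ^ j := by
    rw [← Finset.Ico_add_one_right_eq_Icc, Finset.sum_Ico_eq_sum_range, Finset.mul_sum]
    conv_rhs => rw [← Finset.sum_range_reflect]
    have hidx : t - 1 + 1 - 1 = t - 1 := by omega
    rw [hidx]
    refine Finset.sum_congr rfl fun j hj => ?_
    simp only [Finset.mem_range] at hj
    rw [hQdef, ← pow_mul, ← pow_add]
    congr 1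
    have e0 : t - 1 - 1 - j + (2 + j) = t := by omega
    have e1 : k * (t - 1 - 1 - j) + k * (2 + j) = k * t := by rw [← Nat.mul_add, e0]
    have e2 : k * (2 + j) = 2 * k + k * j := by ring
    have e3 : (1 + j) * k = k + k * j := by ring
    omega
  set A := ∑ j ∈ Finset.range (t - 1), Q ^ j with hA
  have hgeo : A * (Q - 1) + 1 = Q ^ (t - 1) := geo_sum Q (by omega) (t - 1)
  have hqn : q ^ (k + r) * Q ^ (t - 1) = q ^ n := by
    rw [hQdef, ← pow_mul, ← pow_add]
    congr 1
    have e0 : t - 1 + 1 = t := by omega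
    have e1 : k * (t - 1) + k * 1 = k * t := by rw [← Nat.mul_add, e0]
    omega
  have hkey : q ^ (k + r) * A * (Q - 1) + q ^ (k + r) = q ^ n := by
    rw [Nat.mul_assoc, ← hqn, ← hgeo]
    ring
  have hnum : q ^ n - q ^ (k + r) + q ^ k - 1 =
      (1 + q ^ (k + r) * A) * (Q - 1) := by
    rw [Nat.add_mul, Nat.one_mul, ← hQdef]
    set X := q ^ (k + r) * A * (Q - 1) with hX
    omega
  rw [hnum, hsum, Nat.mul_div_cancel _ (by omega : 0 < Q - 1)]

end Aux

/-- Multicomponent construction lower bound: for `n > 2k` and `k ∤ n`,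
`A_q(n,2k;k) ≥ (q^n − q^{k+(n mod k)} + q^k − 1)/(q^k − 1)`, and this quantity equals
`1 + Σ_{i=1}^{⌊n/k⌋−1} q^{n−ik}`. -/
theorem Acdc_multicomponent_lower_bound {K : Type*} [Field K] [Fintype K] {n k : ℕ}
    (hk1 : 1 ≤ k) (h2k : 2 * k < n) (hnd : ¬ k ∣ n) :
    (Fintype.card K ^ n - Fintype.card K ^ (k + n % k) + Fintype.card K ^ k - 1) /
        (Fintype.card K ^ k - 1) ≤ Acdc K (Fin n → K) (2 * k) k ∧
    (Fintype.card K ^ n - Fintype.card K ^ (k + n % k) + Fintype.card K ^ k - 1) /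
        (Fintype.card K ^ k - 1) =
      1 + ∑ i ∈ Finset.Icc 1 (n / k - 1), Fintype.card K ^ (n - i * k) := by
  classical
  have hq2 : 2 ≤ Fintype.card K := Fintype.one_lt_card
  have harith := arith_main (Fintype.card K) k n hq2 hk1 h2k
  refine ⟨?_, harith⟩
  rw [harith]
  obtain ⟨C, h1, h2, h3⟩ := exists_partial_spread K k hk1 n (Fin n → K) inferInstance
    inferInstance inferInstance (Module.finrank_fin_fun K) (by omega)
  have hdS : ∀ U ∈ C, ∀ W ∈ C, U ≠ W → 2 * k ≤ dS U W := by
    intro U hU W hW hne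
    have hUW := h2 U hU W hW hne
    have hsum := Submodule.finrank_sup_add_finrank_inf_eq U W
    have hd : dS U W = finrank K ↥(U ⊔ W) - finrank K ↥(U ⊓ W) := rfl
    rw [hUW, finrank_bot] at hsum
    rw [hd, hUW, finrank_bot, h1 U hU, h1 W hW] at *
    omega
  haveI : Finite (Submodule K (Fin n → K)) :=
    Finite.of_injective (fun U => (U : Set (Fin n → K))) SetLike.coe_injective
  haveI : Fintype (Submodule K (Fin n → K)) := Fintype.ofFinite _
  have hbdd : BddAbove { m | ∃ C : Finset (Submodule K (Fin n → K)),
      (∀ U ∈ C, finrank K ↥U = k) ∧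
      (∀ U ∈ C, ∀ W ∈ C, U ≠ W → 2 * k ≤ dS U W) ∧ C.card = m } := by
    refine ⟨Fintype.card (Submodule K (Fin n → K)), ?_⟩
    rintro x ⟨C', -, -, rfl⟩
    exact Finset.card_le_univ C'
  exact le_csSup hbdd ⟨C, h1, hdS, h3⟩
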